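/- For any real x and integer N ≥ 2, 0 ≤ (Σ_{k=1}^{N-2} e^{kx}) / (Σ_{k=0}^{N-1} e^{kx}) ≤ (N-2)/N. -/

import Mathlib

lemma pair_exp (x a b : ℝ) (ha : 0 ≤ a) (hb : 0 ≤ b) :
    Real.exp (a * x) + Real.exp (b * x) ≤ 1 + Real.exp ((a + b) * x) := by
  have hab : Real.exp ((a + b) * x) = Real.exp (a * x) * Real.exp (b * x) := by
    rw [← Real.exp_add]; ring_nf
  rw [hab]
  rcases le_or_gt 0 x with hx | hx
  · have h1 : 1 ≤ Real.exp (a * x) := Real.one_le_exp (by positivity)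
    have h2 : 1 ≤ Real.exp (b * x) := Real.one_le_exp (by positivity)
    nlinarith
  · have h1 : Real.exp (a * x) ≤ 1 := Real.exp_le_one_iff.2 (by nlinarith)
    have h2 : Real.exp (b * x) ≤ 1 := Real.exp_le_one_iff.2 (by nlinarith)
    nlinarith

theorem geom_ratio_bounds (x : ℝ) (N : ℕ) (hN : 2 ≤ N) :
    0 ≤ (∑ k ∈ Finset.Icc 1 (N - 2), Real.exp (k * x)) /
          (∑ k ∈ Finset.range N, Real.exp (k * x)) ∧
    (∑ k ∈ Finset.Icc 1 (N - 2), Real.exp (k * x)) /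
          (∑ k ∈ Finset.range N, Real.exp (k * x)) ≤ ((N : ℝ) - 2) / N := by
  obtain ⟨m, rfl⟩ := Nat.exists_eq_add_of_le hN
  have hD : 0 < ∑ k ∈ Finset.range (2 + m), Real.exp (k * x) :=
    Finset.sum_pos (fun i _ => Real.exp_pos _) ⟨0, Finset.mem_range.2 (by omega)⟩
  have hNum : 0 ≤ ∑ k ∈ Finset.Icc 1 (2 + m - 2), Real.exp (k * x) :=
    Finset.sum_nonneg fun i _ => (Real.exp_pos _).le
  -- numerator as range sum
  have hIcc : (∑ k ∈ Finset.Icc 1 (2 + m - 2), Real.exp (k * x)) =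
      ∑ j ∈ Finset.range m, Real.exp ((j + 1 : ℕ) * x) := by
    have h2 : 2 + m - 2 = m := by omega
    rw [h2, show Finset.Icc 1 m = Finset.Ico 1 (m + 1) by rw [Finset.Ico_add_one_right_eq_Icc],
      Finset.sum_Ico_eq_sum_range]
    simp [add_comm]
  -- denominator decomposition
  have hDeq : (∑ k ∈ Finset.range (2 + m), Real.exp (k * x)) =
      1 + (∑ j ∈ Finset.range m, Real.exp ((j + 1 : ℕ) * x)) + Real.exp ((m + 1) * x) := by
    have h2 : 2 + m = (m + 1) + 1 := by omega
    rw [h2, Finset.sum_range_succ, Finset.sum_range_succ']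
    push_cast
    simp [Real.exp_zero]
    ring
  set T := ∑ j ∈ Finset.range m, Real.exp ((j + 1 : ℕ) * x) with hT
  -- reflection
  have hrefl : T = ∑ j ∈ Finset.range m, Real.exp (((m : ℝ) - j) * x) := by
    rw [hT, ← Finset.sum_range_reflect (fun j => Real.exp ((j + 1 : ℕ) * x)) m]
    apply Finset.sum_congr rfl
    intro j hj
    have hj' := Finset.mem_range.1 hj
    congr 2
    rw [show m - 1 - j + 1 = m - j by omega, Nat.cast_sub (by omega : j ≤ m)]
  have h2T : T + T ≤ m * (1 + Real.exp ((m + 1) * x)) := by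
    nth_rewrite 2 [hrefl]
    rw [hT, ← Finset.sum_add_distrib]
    calc (∑ j ∈ Finset.range m, (Real.exp ((j + 1 : ℕ) * x) + Real.exp (((m : ℝ) - j) * x)))
        ≤ ∑ j ∈ Finset.range m, (1 + Real.exp ((m + 1) * x)) := by
          apply Finset.sum_le_sum
          intro j hj
          have hj' := Finset.mem_range.1 hj
          have := pair_exp x (j + 1 : ℕ) ((m : ℝ) - j) (by positivity)
            (sub_nonneg.2 (by exact_mod_cast hj'.le))
          convert this using 3
          case e'_2 => rfl
          push_cast; ring
      _ = m * (1 + Real.exp ((m + 1) * x)) := by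
          rw [Finset.sum_const, Finset.card_range, nsmul_eq_mul]
  constructor
  · exact div_nonneg hNum hD.le
  · rw [hIcc, div_le_div_iff₀ hD (by positivity)]
    rw [hDeq]
    have hm : ((2 + m : ℕ) : ℝ) = m + 2 := by push_cast; ring
    rw [hm]
    nlinarith [Real.exp_pos ((m + 1) * x), hT]
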